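/- (Symmetry exchanges the saddles) Let r > 0 and σ > 0 and let T(x, p, y) = (−x − 3, p, 3 − y). Then T(−1, 0, 0) = (−2, 0, 3) and T(−2, 0, 3) = (−1, 0, 0). Moreover, if γ : ℝ → ℝ³ is a solution of the system ẋ = (x + y)² − 1 + σ²p, ṗ = −2(x + y)p, ẏ = r·y·(3 − y) with γ(t) → s₁ = (−1, 0, 0) as t → −∞, then η(t) = T(γ(−t)) is a solution of the same system with η(t) → s₂ = (−2, 0, 3) as t → +∞. In particular, the unstable set of s₁ (points on solutions converging to s₁ in backward time) is mapped by T onto the stable set of s₂ (points on solutions converging to s₂ in forward time). -/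

import Mathlib

private lemma deriv_T (r σ : ℝ) (γ : ℝ → ℝ × ℝ × ℝ)
    (h : ∀ t : ℝ, HasDerivAt γ
      (((γ t).1 + (γ t).2.2) ^ 2 - 1 + σ ^ 2 * (γ t).2.1,
        -2 * ((γ t).1 + (γ t).2.2) * (γ t).2.1,
        r * (γ t).2.2 * (3 - (γ t).2.2)) t) :
    ∀ t : ℝ, HasDerivAt (fun t => (-(γ (-t)).1 - 3, (γ (-t)).2.1, 3 - (γ (-t)).2.2))
      (((-(γ (-t)).1 - 3) + (3 - (γ (-t)).2.2)) ^ 2 - 1 + σ ^ 2 * (γ (-t)).2.1,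
        -2 * ((-(γ (-t)).1 - 3) + (3 - (γ (-t)).2.2)) * (γ (-t)).2.1,
        r * (3 - (γ (-t)).2.2) * (3 - (3 - (γ (-t)).2.2))) t := by
  intro t
  have hd : HasDerivAt (fun s => γ (-s))
      (-((((γ (-t)).1 + (γ (-t)).2.2) ^ 2 - 1 + σ ^ 2 * (γ (-t)).2.1)),
        -(-2 * ((γ (-t)).1 + (γ (-t)).2.2) * (γ (-t)).2.1),
        -(r * (γ (-t)).2.2 * (3 - (γ (-t)).2.2))) t := by
    have := (h (-t)).scomp t (hasDerivAt_neg t)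
    simpa [Prod.smul_def, neg_one_smul, Function.comp_def] using this
  have h1 : HasDerivAt (fun x => (γ (-x)).1)
      (-((((γ (-t)).1 + (γ (-t)).2.2) ^ 2 - 1 + σ ^ 2 * (γ (-t)).2.1))) t :=
    by have := hasFDerivAt_fst.comp_hasDerivAt t hd; exact this
  have h23 := hasFDerivAt_snd.comp_hasDerivAt t hd
  have h2 : HasDerivAt (fun x => (γ (-x)).2.1)
      (-(-2 * ((γ (-t)).1 + (γ (-t)).2.2) * (γ (-t)).2.1)) t :=
    by have := hasFDerivAt_fst.comp_hasDerivAt t h23; exact this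
  have h3 : HasDerivAt (fun x => (γ (-x)).2.2)
      (-(r * (γ (-t)).2.2 * (3 - (γ (-t)).2.2))) t :=
    by have := hasFDerivAt_snd.comp_hasDerivAt t h23; exact this
  have key := (h1.neg.sub_const 3).prodMk (h2.prodMk (h3.const_sub 3))
  have e : (((-(γ (-t)).1 - 3) + (3 - (γ (-t)).2.2)) ^ 2 - 1 + σ ^ 2 * (γ (-t)).2.1,
        -2 * ((-(γ (-t)).1 - 3) + (3 - (γ (-t)).2.2)) * (γ (-t)).2.1,
        r * (3 - (γ (-t)).2.2) * (3 - (3 - (γ (-t)).2.2)))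
      = ((- -((((γ (-t)).1 + (γ (-t)).2.2) ^ 2 - 1 + σ ^ 2 * (γ (-t)).2.1)) : ℝ),
        ((-(-2 * ((γ (-t)).1 + (γ (-t)).2.2) * (γ (-t)).2.1) : ℝ),
          (- -(r * (γ (-t)).2.2 * (3 - (γ (-t)).2.2)) : ℝ))) := by
    refine Prod.ext (by ring) (Prod.ext (by ring) (by ring))
  rw [e]
  exact key

/-- The symmetry `T(x, p, y) = (−x − 3, p, 3 − y)` exchanges the saddles:
`T(−1, 0, 0) = (−2, 0, 3)` and `T(−2, 0, 3) = (−1, 0, 0)`; if `γ` is a solution of the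
most probable path system with `γ(t) → s₁ = (−1, 0, 0)` as `t → −∞`, then
`η(t) = T(γ(−t))` is a solution with `η(t) → s₂ = (−2, 0, 3)` as `t → +∞`; and `T` maps
the unstable set of `s₁` onto the stable set of `s₂`. -/
theorem symmetry_exchanges_saddles (r σ : ℝ) (hr : 0 < r) (hσ : 0 < σ) :
    let F : ℝ × ℝ × ℝ → ℝ × ℝ × ℝ := fun v =>
      ((v.1 + v.2.2) ^ 2 - 1 + σ ^ 2 * v.2.1, -2 * (v.1 + v.2.2) * v.2.1,
        r * v.2.2 * (3 - v.2.2))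
    let T : ℝ × ℝ × ℝ → ℝ × ℝ × ℝ := fun v => (-v.1 - 3, v.2.1, 3 - v.2.2)
    let s₁ : ℝ × ℝ × ℝ := (-1, 0, 0)
    let s₂ : ℝ × ℝ × ℝ := (-2, 0, 3)
    T s₁ = s₂ ∧ T s₂ = s₁ ∧
    (∀ γ : ℝ → ℝ × ℝ × ℝ, (∀ t : ℝ, HasDerivAt γ (F (γ t)) t) →
      Filter.Tendsto γ Filter.atBot (nhds s₁) →
      ((∀ t : ℝ, HasDerivAt (fun t => T (γ (-t))) (F (T (γ (-t)))) t) ∧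
        Filter.Tendsto (fun t => T (γ (-t))) Filter.atTop (nhds s₂))) ∧
    T '' {v : ℝ × ℝ × ℝ | ∃ γ : ℝ → ℝ × ℝ × ℝ,
        (∀ t : ℝ, HasDerivAt γ (F (γ t)) t) ∧ γ 0 = v ∧
          Filter.Tendsto γ Filter.atBot (nhds s₁)} =
      {v : ℝ × ℝ × ℝ | ∃ γ : ℝ → ℝ × ℝ × ℝ,
        (∀ t : ℝ, HasDerivAt γ (F (γ t)) t) ∧ γ 0 = v ∧
          Filter.Tendsto γ Filter.atTop (nhds s₂)} := by
  intro F T s₁ s₂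
  have hTcont : Continuous T := by
    simp only [T]
    exact ((continuous_fst.neg.sub continuous_const).prodMk
      ((continuous_snd.fst).prodMk (continuous_const.sub continuous_snd.snd)))
  have hsol : ∀ γ : ℝ → ℝ × ℝ × ℝ, (∀ t : ℝ, HasDerivAt γ (F (γ t)) t) →
      ∀ t : ℝ, HasDerivAt (fun t => T (γ (-t))) (F (T (γ (-t)))) t := by
    intro γ hγ t
    simp only [F, T] at hγ ⊢
    exact deriv_T r σ γ hγ t
  refine ⟨by norm_num [T, s₁, s₂], by norm_num [T, s₁, s₂], ?_, ?_⟩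
  · intro γ hγ hlim
    refine ⟨hsol γ hγ, ?_⟩
    have h1 : Filter.Tendsto (fun t => γ (-t)) Filter.atTop (nhds s₁) :=
      hlim.comp Filter.tendsto_neg_atTop_atBot
    have := (hTcont.tendsto s₁).comp h1
    simpa [Function.comp_def, show T s₁ = s₂ by norm_num [T, s₁, s₂]] using this
  · ext v
    constructor
    · rintro ⟨u, ⟨γ, hγ, hγ0, hlim⟩, rfl⟩
      refine ⟨fun t => T (γ (-t)), hsol γ hγ, by simp [hγ0], ?_⟩
      have h1 : Filter.Tendsto (fun t => γ (-t)) Filter.atTop (nhds s₁) :=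
        hlim.comp Filter.tendsto_neg_atTop_atBot
      have := (hTcont.tendsto s₁).comp h1
      simpa [Function.comp_def, show T s₁ = s₂ by norm_num [T, s₁, s₂]] using this
    · rintro ⟨η, hη, hη0, hlim⟩
      refine ⟨T v, ⟨fun t => T (η (-t)), hsol η hη, by simp [hη0], ?_⟩, ?_⟩
      · have h1 : Filter.Tendsto (fun t => η (-t)) Filter.atBot (nhds s₂) :=
          hlim.comp Filter.tendsto_neg_atBot_atTop
        have := (hTcont.tendsto s₂).comp h1
        simpa [Function.comp_def, show T s₂ = s₁ by norm_num [T, s₁, s₂]] using this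
      · simp [T]
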